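/- For every (b,d) ∈ P, i.e. 0 < b < d, there exists an integer H ≥ 3 such that for every integer h ≥ H there exists N₂ ∈ ℕ (depending on (b,d) and h) such that for all integers N ≥ N₂ the following holds: every integer k* ∈ {0, 1, …, ⌊N/2⌋} at which the function k ↦ F( cos(2πk/N), T_h(cos(2πk/N)), b, d ) attains its minimum over {0, 1, …, ⌊N/2⌋} satisfies ⌈N/(4h)⌉ ≤ k* ≤ ⌈N/(2h)⌉. -/

import Mathlib

open Real

noncomputable def F (x y b d : ℝ) : ℝ :=
  -b*d*x^2 + (b*d^2*y - b*(b+d) - d*(b+1)*(b+2*d))*x + b*d*(b+d)*y + (b+1)*(b+d)*(b+2*d)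

noncomputable def cheb (h : ℕ) (x : ℝ) : ℝ := (Polynomial.Chebyshev.T ℝ h).eval x

noncomputable def Qf (b d x : ℝ) : ℝ :=
  -(b*d)*x^2 - (b*(b+d) + d*(b+1)*(b+2*d))*x + (b+1)*(b+d)*(b+2*d)
noncomputable def cf (b d x : ℝ) : ℝ := b*d*(d*x+b+d)

lemma cheb_cos' (h : ℕ) (θ : ℝ) : cheb h (cos θ) = cos (h * θ) := by
  unfold cheb
  rw [Polynomial.Chebyshev.T_real_cos]
  push_cast
  ring_nf

lemma F_eq (b d x y : ℝ) : F x y b d = Qf b d x + cf b d x * y := by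
  unfold F Qf cf; ring

lemma A_big (b d : ℝ) (hb : 0 < b) (hbd : b < d) :
    2*b*d ≤ b*(b+d) + d*(b+1)*(b+2*d) := by
  have hd : 0 < d := hb.trans hbd
  nlinarith [mul_pos hd hd, mul_pos hb hd, mul_pos (mul_pos hb hb) hd,
    mul_pos (mul_pos hb hd) hd]

lemma Q_ge (b d x : ℝ) (hb : 0 < b) (hbd : b < d) (hx1 : -1 ≤ x) (hx : x ≤ 1) :
    Qf b d 1 ≤ Qf b d x := by
  have hd : 0 < d := hb.trans hbd
  have h0 : (0:ℝ) ≤ b*d*(1+x) + (b*(b+d) + d*(b+1)*(b+2*d)) := by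
    nlinarith [A_big b d hb hbd, mul_nonneg (mul_nonneg hb.le hd.le) (by linarith : (0:ℝ) ≤ 1+x)]
  unfold Qf
  nlinarith [mul_nonneg (sub_nonneg.2 hx) h0]

lemma c_low (b d x : ℝ) (hb : 0 < b) (hbd : b < d) (hx1 : -1 ≤ x) : b^2*d ≤ cf b d x := by
  have hd : 0 < d := hb.trans hbd
  unfold cf
  nlinarith [mul_nonneg (mul_nonneg (mul_nonneg hb.le hd.le) hd.le) (by linarith : (0:ℝ) ≤ 1+x)]

lemma c_high (b d x : ℝ) (hb : 0 < b) (hbd : b < d) (hx : x ≤ 1) : cf b d x ≤ b*d*(2*d+b) := by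
  have hd : 0 < d := hb.trans hbd
  unfold cf
  nlinarith [mul_nonneg (mul_nonneg (mul_nonneg hb.le hd.le) hd.le) (by linarith : (0:ℝ) ≤ 1-x)]

lemma Q_lip (b d x : ℝ) (hb : 0 < b) (hbd : b < d) (hx1 : -1 ≤ x) (hx : x ≤ 1) :
    Qf b d x ≤ Qf b d 1 + (b*(b+d) + d*(b+1)*(b+2*d) + 2*b*d) * (1-x) := by
  have hd : 0 < d := hb.trans hbd
  unfold Qf
  nlinarith [mul_nonneg (mul_nonneg hb.le hd.le) (sq_nonneg (1-x))]

lemma E_slope (b d x x' : ℝ) (hb : 0 < b) (hbd : b < d) (hx1 : -1 ≤ x) (hx' : x' ≤ 1)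
    (hxx : x ≤ x') :
    (Qf b d x' - cf b d x') + b*d^2*(x'-x) ≤ Qf b d x - cf b d x := by
  have hd : 0 < d := hb.trans hbd
  have hA : (0:ℝ) ≤ b*d*(x+x') + (b*(b+d) + d*(b+1)*(b+2*d)) := by
    nlinarith [A_big b d hb hbd, mul_nonneg (mul_nonneg hb.le hd.le) (by linarith : (0:ℝ) ≤ x+x'+2)]
  unfold Qf cf
  nlinarith [mul_nonneg (sub_nonneg.2 hxx) hA]

set_option maxHeartbeats 2000000 in
theorem discrete_bifurcation_most_unstable_mode (b d : ℝ) (hb : 0 < b) (hbd : b < d) :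
    ∃ H : ℕ, 3 ≤ H ∧ ∀ h : ℕ, H ≤ h →
      ∃ N₂ : ℕ, ∀ N : ℕ, N₂ ≤ N →
        ∀ kstar : ℕ, kstar ≤ N / 2 →
          (∀ k : ℕ, k ≤ N / 2 →
            F (cos (2*π*kstar/N)) (cheb h (cos (2*π*kstar/N))) b d ≤
              F (cos (2*π*k/N)) (cheb h (cos (2*π*k/N))) b d) →
          ⌈(N : ℝ)/(4*h)⌉ ≤ (kstar : ℤ) ∧ (kstar : ℤ) ≤ ⌈(N : ℝ)/(2*h)⌉ := by
  have hd : 0 < d := hb.trans hbd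
  have hπ : 0 < π := Real.pi_pos
  set L : ℝ := b*(b+d) + d*(b+1)*(b+2*d) + 2*b*d with hLdef
  set cM : ℝ := b*d*(2*d+b) with hcMdef
  have hL0 : 0 < L := by
    rw [hLdef]
    nlinarith [mul_pos hb (by linarith : (0:ℝ) < b+d),
      mul_pos (mul_pos hd (by linarith : (0:ℝ) < b+1)) (by linarith : (0:ℝ) < b+2*d),
      mul_pos hb hd]
  have hcM0 : 0 < cM := by rw [hcMdef]; positivity
  clear_value cM
  have hb2d : (0:ℝ) < b^2*d := by positivity
  clear_value L
  obtain ⟨H, hHgt⟩ := exists_nat_gt (max 3 (8*π^2*L/(b^2*d)))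
  have hH3 : 3 ≤ H := by
    have h3 : (3:ℝ) < H := lt_of_le_of_lt (le_max_left _ _) hHgt
    exact_mod_cast h3.le
  refine ⟨H, hH3, ?_⟩
  intro h hh
  have hh3 : 3 ≤ h := hH3.trans hh
  have hhR : (3:ℝ) ≤ h := by exact_mod_cast hh3
  have hhpos : (0:ℝ) < h := by linarith
  have hhL : 8*π^2*L/(b^2*d) < h :=
    lt_of_lt_of_le (lt_of_le_of_lt (le_max_right _ _) hHgt) (by exact_mod_cast hh)
  have hS1 : 8*π^2*L < b^2*d*(h:ℝ)^2 := by
    have h1 : 8*π^2*L < (h:ℝ)*(b^2*d) := (div_lt_iff₀ hb2d).1 hhL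
    nlinarith only [h1, mul_nonneg (mul_pos hb2d hhpos).le (by linarith : (0:ℝ) ≤ (h:ℝ)-1)]
  obtain ⟨N₂, hN₂gt⟩ := exists_nat_gt
    (max (12*(h:ℝ)) (max (8*π^2*cM*(h:ℝ)^2/(b^2*d)) (cM*π^2*(h:ℝ)^3/(4*b*d^2))))
  refine ⟨N₂, ?_⟩
  intro N hN kstar hks hmin
  have hNN₂ : (N₂:ℝ) ≤ N := by exact_mod_cast hN
  have hN12 : 12*(h:ℝ) < N :=
    lt_of_lt_of_le (lt_of_le_of_lt (le_max_left _ _) hN₂gt) hNN₂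
  have hN2a : 8*π^2*cM*(h:ℝ)^2/(b^2*d) < N :=
    lt_of_lt_of_le (lt_of_le_of_lt ((le_max_left _ _).trans (le_max_right _ _)) hN₂gt) hNN₂
  have hN2b : cM*π^2*(h:ℝ)^3/(4*b*d^2) < N :=
    lt_of_lt_of_le (lt_of_le_of_lt ((le_max_right _ _).trans (le_max_right _ _)) hN₂gt) hNN₂
  have hNpos : (0:ℝ) < N := by linarith
  have hhN : (0:ℝ) < (h:ℝ)*N := mul_pos hhpos hNpos
  have hS2 : 8*π^2*cM*(h:ℝ)^2 < b^2*d*(N:ℝ)^2 := by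
    have h1 : 8*π^2*cM*(h:ℝ)^2 < (N:ℝ)*(b^2*d) := (div_lt_iff₀ hb2d).1 hN2a
    nlinarith only [h1, mul_nonneg (mul_pos hb2d hNpos).le (by linarith : (0:ℝ) ≤ (N:ℝ)-1)]
  have hS3 : cM*π^2*(h:ℝ)^3 < 4*b*d^2*(N:ℝ) := by
    have h1 := (div_lt_iff₀ (by positivity : (0:ℝ) < 4*b*d^2)).1 hN2b
    linarith
  -- the special index k₀
  set q : ℝ := (N:ℝ)/(2*h) with hqdef
  have hq0 : 0 ≤ q := by rw [hqdef]; positivity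
  set k₀ : ℕ := ⌈q⌉.toNat with hk₀def
  have hk₀Z : (k₀:ℤ) = ⌈q⌉ := Int.toNat_of_nonneg (Int.ceil_nonneg hq0)
  have hk₀ge : q ≤ (k₀:ℝ) := by
    have h1 := Int.le_ceil q
    rw [← hk₀Z] at h1
    exact_mod_cast h1
  have hk₀lt : (k₀:ℝ) < q + 1 := by
    have h1 := Int.ceil_lt_add_one q
    rw [← hk₀Z] at h1
    exact_mod_cast h1
  clear_value k₀
  have hqN : q*(2*(h:ℝ)) = N := by rw [hqdef]; field_simp
  clear_value q
  have hKlow : (N:ℝ) ≤ 2*h*k₀ := by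
    have h1 := mul_le_mul_of_nonneg_right hk₀ge (by linarith : (0:ℝ) ≤ 2*h)
    rw [hqN] at h1
    have h2 : (k₀:ℝ)*(2*h) = 2*h*k₀ := by ring
    linarith
  have hKhigh : 2*(h:ℝ)*k₀ < N + 2*h := by
    have h1 := mul_lt_mul_of_pos_right hk₀lt (by linarith : (0:ℝ) < 2*h)
    rw [add_mul, hqN, one_mul] at h1
    have h2 : (k₀:ℝ)*(2*h) = 2*h*k₀ := by ring
    linarith
  have hk₀nn : (0:ℝ) ≤ k₀ := Nat.cast_nonneg _
  have hk₀N2 : k₀ ≤ N/2 := by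
    have h6 : 6*(k₀:ℝ) ≤ 2*h*k₀ := by
      nlinarith only [mul_nonneg (by linarith : (0:ℝ) ≤ (h:ℝ)-3) hk₀nn]
    have hr : (k₀:ℝ)*2 < N := by linarith
    have hr2 : k₀*2 < N := by exact_mod_cast hr
    omega
  -- the angle θ₀
  set θ₀ : ℝ := 2*π*(k₀:ℝ)/N with hθ₀def
  clear_value θ₀
  have hk₀pos : (0:ℝ) < k₀ := by
    have h1 : (0:ℝ) < 2*(h:ℝ)*k₀ := lt_of_lt_of_le hNpos hKlow
    nlinarith only [h1, hhpos]
  have hθ₀pos : 0 < θ₀ := by rw [hθ₀def]; positivity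
  have hθ₀lb : π/h ≤ θ₀ := by
    rw [hθ₀def, div_le_div_iff₀ hhpos hNpos]
    linarith only [mul_le_mul_of_nonneg_left hKlow hπ.le]
  have hθ₀ub : θ₀ ≤ 7*π/(6*h) := by
    rw [hθ₀def, div_le_div_iff₀ hNpos (by linarith : (0:ℝ) < 6*h)]
    linarith only [mul_le_mul_of_nonneg_left hKhigh.le hπ.le,
      mul_lt_mul_of_pos_left hN12 hπ]
  have hθ₀2 : θ₀ ≤ 2*π/h := by
    refine hθ₀ub.trans ?_
    rw [div_le_div_iff₀ (by linarith : (0:ℝ) < 6*h) hhpos]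
    linarith only [mul_pos hπ hhpos]
  set η : ℝ := (h:ℝ)*θ₀ - π with hηdef
  clear_value η
  have hη0 : 0 ≤ η := by
    have h1 := mul_le_mul_of_nonneg_left hθ₀lb hhpos.le
    rw [mul_div_cancel₀ _ (ne_of_gt hhpos)] at h1
    rw [hηdef]; linarith
  have hηN : η*N ≤ 2*π*h := by
    have e1 : (h:ℝ)*θ₀*N = 2*π*k₀*h := by rw [hθ₀def]; field_simp
    rw [hηdef, sub_mul, e1]
    linarith only [mul_lt_mul_of_pos_left hKhigh hπ]
  have hx₀1 : -1 ≤ cos θ₀ := neg_one_le_cos θ₀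
  have hx₀2 : cos θ₀ ≤ 1 := cos_le_one θ₀
  -- value at k₀
  have ht₀ : cos ((h:ℝ)*θ₀) ≤ -1 + η^2/2 := by
    have e : (h:ℝ)*θ₀ = π + η := by rw [hηdef]; ring
    have e2 : cos (π + η) = -cos η := by simp [Real.cos_add]
    rw [e, e2]
    have h1 := Real.one_sub_sq_div_two_le_cos (x := η)
    linarith
  have hcl := c_low b d (cos θ₀) hb hbd hx₀1
  have hch := c_high b d (cos θ₀) hb hbd hx₀2
  rw [← hcMdef] at hch
  have hcf0 : 0 ≤ cf b d (cos θ₀) := le_trans hb2d.le hcl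
  have hgk₀E : Qf b d (cos θ₀) + cf b d (cos θ₀) * cos ((h:ℝ)*θ₀)
      ≤ (Qf b d (cos θ₀) - cf b d (cos θ₀)) + cM*(η^2/2) := by
    have h4 := mul_le_mul_of_nonneg_left ht₀ hcf0
    have h5 := mul_le_mul_of_nonneg_right hch (by positivity : (0:ℝ) ≤ η^2/2)
    linarith only [h4, h5]
  -- smallness bounds
  have hsm1 : L*(θ₀^2/2) ≤ b^2*d/4 := by
    have ha : (θ₀*(h:ℝ))^2 ≤ (2*π)^2 := by
      have h1 : θ₀*(h:ℝ) ≤ 2*π := by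
        have h2 := mul_le_mul_of_nonneg_right hθ₀2 hhpos.le
        rw [div_mul_cancel₀ _ (ne_of_gt hhpos)] at h2
        linarith
      nlinarith only [h1, hπ, mul_nonneg hθ₀pos.le hhpos.le]
    have hh2 : (0:ℝ) < (h:ℝ)^2 := by positivity
    rw [← mul_le_mul_iff_of_pos_right hh2]
    have h3 := mul_le_mul_of_nonneg_left ha (by linarith : (0:ℝ) ≤ L/2)
    linarith only [h3, hS1]
  have hsm2 : cM*(η^2/2) ≤ b^2*d/4 := by
    have ha : (η*(N:ℝ))^2 ≤ (2*π*h)^2 := by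
      nlinarith only [hηN, mul_nonneg hη0 hNpos.le, mul_pos hπ hhpos]
    have hN2' : (0:ℝ) < (N:ℝ)^2 := by positivity
    rw [← mul_le_mul_iff_of_pos_right hN2']
    have h3 := mul_le_mul_of_nonneg_left ha (by linarith : (0:ℝ) ≤ cM/2)
    linarith only [h3, hS2]
  have hQlip := Q_lip b d (cos θ₀) hb hbd hx₀1 hx₀2
  rw [← hLdef] at hQlip
  have hcos₀ : 1 - cos θ₀ ≤ θ₀^2/2 := by
    have h1 := Real.one_sub_sq_div_two_le_cos (x := θ₀)
    linarith
  have hgk₀ : Qf b d (cos θ₀) + cf b d (cos θ₀) * cos ((h:ℝ)*θ₀) < Qf b d 1 := by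
    have h1 : L*(1 - cos θ₀) ≤ L*(θ₀^2/2) := mul_le_mul_of_nonneg_left hcos₀ hL0.le
    have h4 := mul_le_mul_of_nonneg_left ht₀ hcf0
    have h5 := mul_le_mul_of_nonneg_right hch (by positivity : (0:ℝ) ≤ η^2/2)
    linarith only [h1, h4, h5, hsm1, hsm2, hQlip, hcl, hb2d]
  -- rewrite the minimality hypothesis
  simp only [cheb_cos', F_eq] at hmin
  have hmink₀ := hmin k₀ hk₀N2
  rw [← hθ₀def] at hmink₀
  -- kstar facts
  set θs : ℝ := 2*π*(kstar:ℝ)/N with hθsdef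
  clear_value θs
  have hksN : (kstar:ℝ)*2 ≤ N := by
    have h1 : kstar*2 ≤ N := (Nat.le_div_iff_mul_le (by norm_num)).1 hks
    exact_mod_cast h1
  have hθs0 : 0 ≤ θs := by rw [hθsdef]; positivity
  have hθspi : θs ≤ π := by
    rw [hθsdef, div_le_iff₀ hNpos]
    linarith only [mul_le_mul_of_nonneg_left hksN hπ.le]
  have hxs1 : -1 ≤ cos θs := neg_one_le_cos θs
  have hxs2 : cos θs ≤ 1 := cos_le_one θs
  have hmins : Qf b d (cos θs) + cf b d (cos θs) * cos ((h:ℝ)*θs) < Qf b d 1 :=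
    lt_of_le_of_lt hmink₀ hgk₀
  constructor
  · -- lower bound
    have hlow : (N:ℝ)/(4*h) < kstar := by
      by_contra hcon
      push_neg at hcon
      have hhts : (h:ℝ)*θs ≤ π/2 := by
        have h1 : 4*(h:ℝ)*kstar ≤ N := by
          have h2 := mul_le_mul_of_nonneg_right hcon (by linarith : (0:ℝ) ≤ 4*h)
          rw [div_mul_cancel₀ _ (by positivity : (4*(h:ℝ)) ≠ 0)] at h2
          linarith
        rw [hθsdef, show (h:ℝ)*(2*π*kstar/N) = (2*π*((h:ℝ)*kstar))/N by ring,
          div_le_iff₀ hNpos]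
        linarith only [mul_le_mul_of_nonneg_left h1 hπ.le]
      have hhts0 : 0 ≤ (h:ℝ)*θs := mul_nonneg hhpos.le hθs0
      have hcosnn : 0 ≤ cos ((h:ℝ)*θs) :=
        Real.cos_nonneg_of_mem_Icc ⟨by linarith, hhts⟩
      have hcfs : 0 ≤ cf b d (cos θs) := le_trans hb2d.le (c_low b d _ hb hbd hxs1)
      have hQg := Q_ge b d (cos θs) hb hbd hxs1 hxs2
      linarith only [mul_nonneg hcfs hcosnn, hmins, hQg]
    exact Int.ceil_le.2 (by push_cast; linarith only [hlow])
  · -- upper bound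
    have hup : kstar ≤ k₀ := by
      by_contra hcon
      push_neg at hcon
      have hk1 : (k₀:ℝ) + 1 ≤ kstar := by exact_mod_cast hcon
      have hθsep : θ₀ + 2*π/N ≤ θs := by
        rw [hθ₀def, hθsdef, ← add_div, div_le_div_iff₀ hNpos hNpos]
        linarith only [mul_le_mul_of_nonneg_right
          (mul_le_mul_of_nonneg_left hk1 (by linarith : (0:ℝ) ≤ 2*π)) hNpos.le]
      have h2πN0 : 0 ≤ 2*π/(N:ℝ) := by positivity
      have hxs : cos θs ≤ cos (θ₀ + 2*π/N) :=
        Real.cos_le_cos_of_nonneg_of_le_pi (by linarith) hθspi hθsep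
      -- the cosine gap
      have hN36 : (36:ℝ) ≤ N := by linarith
      have hhalf : θ₀ + π/N ≤ π/2 := by
        have e1 : 7*π/(6*(h:ℝ)) ≤ 7*π/18 :=
          div_le_div_of_nonneg_left (by positivity) (by norm_num) (by linarith)
        have e2 : π/(N:ℝ) ≤ π/36 :=
          div_le_div_of_nonneg_left hπ.le (by norm_num) hN36
        linarith
      have hsin1 : 2/(h:ℝ) ≤ sin (θ₀ + π/N) := by
        have h0 : 0 ≤ θ₀ + π/(N:ℝ) := by
          have := div_nonneg hπ.le hNpos.le
          linarith
        have hms := Real.mul_le_sin h0 hhalf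
        have h2 : π/(h:ℝ) ≤ θ₀ + π/N := by
          have := div_nonneg hπ.le hNpos.le
          linarith
        have h3 : 2/π*(π/(h:ℝ)) = 2/h := by field_simp
        linarith only [hms, h3, mul_le_mul_of_nonneg_left h2 (by positivity : (0:ℝ) ≤ 2/π)]
      have hsin2 : 2/(N:ℝ) ≤ sin (π/N) := by
        have h0 : 0 ≤ π/(N:ℝ) := div_nonneg hπ.le hNpos.le
        have h1 : π/(N:ℝ) ≤ π/2 :=
          div_le_div_of_nonneg_left hπ.le (by norm_num) (by linarith)
        have hms := Real.mul_le_sin h0 h1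
        have h3 : 2/π*(π/(N:ℝ)) = 2/N := by field_simp
        linarith
      have hgapcos : cos θ₀ - cos (θ₀ + 2*π/N) = 2*sin (θ₀+π/N)*sin (π/N) := by
        rw [Real.cos_sub_cos,
          show (θ₀ + (θ₀+2*π/(N:ℝ)))/2 = θ₀ + π/N by ring,
          show (θ₀ - (θ₀+2*π/(N:ℝ)))/2 = -(π/N) by ring,
          Real.sin_neg]
        ring
      have hgap : 8/((h:ℝ)*N) ≤ cos θ₀ - cos θs := by
        have h1 : (2/(h:ℝ))*(2/(N:ℝ)) ≤ sin (θ₀+π/N)*sin (π/N) :=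
          mul_le_mul hsin1 hsin2 (by positivity) (le_trans (by positivity) hsin1)
        have h2 : 8/((h:ℝ)*N) = 2*((2/(h:ℝ))*(2/(N:ℝ))) := by
          field_simp
          ring
        linarith only [hgapcos, hxs, h1, h2]
      have hxsx₀ : cos θs ≤ cos θ₀ := by
        have h8 : 0 < 8/((h:ℝ)*N) := by positivity
        linarith
      have hE := E_slope b d (cos θs) (cos θ₀) hb hbd hxs1 hx₀2 hxsx₀
      have hcfs0 : 0 ≤ cf b d (cos θs) := le_trans hb2d.le (c_low b d _ hb hbd hxs1)
      have hcosge : -1 ≤ cos ((h:ℝ)*θs) := neg_one_le_cos _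
      have hval_s : (Qf b d (cos θ₀) - cf b d (cos θ₀)) + b*d^2*(cos θ₀ - cos θs)
          ≤ Qf b d (cos θs) + cf b d (cos θs) * cos ((h:ℝ)*θs) := by
        have h1 : -(cf b d (cos θs)) ≤ cf b d (cos θs) * cos ((h:ℝ)*θs) := by
          linarith only [mul_le_mul_of_nonneg_left hcosge hcfs0]
        linarith [hE]
      have hbd2 : (0:ℝ) < b*d^2 := by positivity
      have hclaim2 : cM*(η^2/2)*((h:ℝ)*N)*N < 8*b*d^2*N := by
        have f1 : (η*(N:ℝ))^2 ≤ (2*π*h)^2 := by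
          nlinarith only [hηN, mul_nonneg hη0 hNpos.le, mul_pos hπ hhpos]
        linarith only [mul_le_mul_of_nonneg_left f1
          (by nlinarith only [mul_pos hcM0 hhpos] : (0:ℝ) ≤ cM*h/2), hS3]
      have hclaim : cM*(η^2/2) < 8*b*d^2/((h:ℝ)*N) := by
        rw [lt_div_iff₀ hhN]
        exact (mul_lt_mul_iff_of_pos_right hNpos).1 hclaim2
      have hfin : Qf b d (cos θ₀) + cf b d (cos θ₀) * cos ((h:ℝ)*θ₀)
          < Qf b d (cos θs) + cf b d (cos θs) * cos ((h:ℝ)*θs) := by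
        have h1 : b*d^2*(8/((h:ℝ)*N)) ≤ b*d^2*(cos θ₀ - cos θs) :=
          mul_le_mul_of_nonneg_left hgap hbd2.le
        have h2 : b*d^2*(8/((h:ℝ)*N)) = 8*b*d^2/((h:ℝ)*N) := by ring
        linarith only [hgk₀E, hval_s, hclaim, h1, h2]
      linarith only [hmink₀, hfin]
    rw [← hk₀Z]
    exact_mod_cast hup
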